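/- arXiv:2401.07587 — 5 statements merged into one kernel-verified Lean document; each statement's English description precedes it below -/
import Mathlib

section
/- Let u_0, v_0 ∈ ℝ^p and let R_{u_0} be an orthogonal p×p matrix such that R_{u_0} applied to the vector (|u_0|, 0, …, 0) equals u_0. Then there exists an orthogonal matrix R_{v_0} with R_{v_0}(|v_0|, 0, …, 0) = v_0 and such that the operator norm ‖|u_0| R_{u_0} − |v_0| R_{v_0}‖ ≤ |u_0 − v_0|. -/
open scoped RealInnerProductSpace

section Aux
variable {E : Type*} [NormedAddCommGroup E] [InnerProductSpace ℝ E]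

noncomputable def rotMap (x y : E) : E →L[ℝ] E :=
  ContinuousLinearMap.id ℝ E
    - (1 + ⟪x, y⟫)⁻¹ • ((innerSL ℝ (x + y)).smulRight (x + y))
    + (2 : ℝ) • ((innerSL ℝ x).smulRight y)

lemma rotMap_apply (x y z : E) :
    rotMap x y z = z - ((1 + ⟪x, y⟫)⁻¹ * ⟪x + y, z⟫) • (x + y) + (2 * ⟪x, z⟫) • y := by
  simp [rotMap, mul_smul, inner_add_left]

lemma rotMap_inner (x y : E) (hx : ‖x‖ = 1) (hy : ‖y‖ = 1) (hc : 1 + ⟪x, y⟫ ≠ 0)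
    (z w : E) : ⟪rotMap x y z, rotMap x y w⟫ = ⟪z, w⟫ := by
  have hxx : ⟪x, x⟫ = 1 := by rw [real_inner_self_eq_norm_sq, hx]; norm_num
  have hyy : ⟪y, y⟫ = 1 := by rw [real_inner_self_eq_norm_sq, hy]; norm_num
  have hyx : ⟪y, x⟫ = ⟪x, y⟫ := real_inner_comm x y
  have hzx : ⟪z, x⟫ = ⟪x, z⟫ := real_inner_comm x z
  have hzy : ⟪z, y⟫ = ⟪y, z⟫ := real_inner_comm y z
  have hwx : ⟪w, x⟫ = ⟪x, w⟫ := real_inner_comm x w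
  have hwy : ⟪w, y⟫ = ⟪y, w⟫ := real_inner_comm y w
  have hwz : ⟪w, z⟫ = ⟪z, w⟫ := real_inner_comm z w
  simp only [rotMap_apply, inner_add_left, inner_add_right, inner_sub_left, inner_sub_right,
    real_inner_smul_left, real_inner_smul_right, hxx, hyy, hyx, hzx, hzy, hwx, hwy, hwz]
  field_simp
  ring

lemma rotMap_self (x y : E) (hx : ‖x‖ = 1) (hc : 1 + ⟪x, y⟫ ≠ 0) :
    rotMap x y x = y := by
  have hxx : ⟪x, x⟫ = 1 := by rw [real_inner_self_eq_norm_sq, hx]; norm_num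
  have hyx : ⟪y, x⟫ = ⟪x, y⟫ := real_inner_comm x y
  rw [rotMap_apply, inner_add_left, hxx, hyx]
  rw [show (1 + ⟪x, y⟫)⁻¹ * (1 + ⟪x, y⟫) = 1 from inv_mul_cancel₀ hc]
  module

lemma gram_ineq (x y z : E) (hx : ‖x‖ = 1) (hy : ‖y‖ = 1) :
    ⟪x, z⟫ ^ 2 - 2 * ⟪x, y⟫ * ⟪x, z⟫ * ⟪y, z⟫ + ⟪y, z⟫ ^ 2
      ≤ (1 - ⟪x, y⟫ ^ 2) * ⟪z, z⟫ := by
  have hxx : ⟪x, x⟫ = 1 := by rw [real_inner_self_eq_norm_sq, hx]; norm_num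
  have hyy : ⟪y, y⟫ = 1 := by rw [real_inner_self_eq_norm_sq, hy]; norm_num
  have hyx : ⟪y, x⟫ = ⟪x, y⟫ := real_inner_comm x y
  have hzx : ⟪z, x⟫ = ⟪x, z⟫ := real_inner_comm x z
  have hzy : ⟪z, y⟫ = ⟪y, z⟫ := real_inner_comm y z
  have h := real_inner_mul_inner_self_le (y - ⟪x, y⟫ • x) (z - ⟪x, z⟫ • x)
  simp only [inner_sub_left, inner_sub_right, real_inner_smul_left, real_inner_smul_right,
    hxx, hyy, hyx, hzx, hzy] at h
  nlinarith [h]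

lemma rotMap_bound (x y z : E) (hx : ‖x‖ = 1) (hy : ‖y‖ = 1) (hc : 0 < 1 + ⟪x, y⟫)
    (a b : ℝ) (ha : 0 ≤ a) (hb : 0 ≤ b) :
    ‖a • z - b • rotMap x y z‖ ≤ ‖a • x - b • y‖ * ‖z‖ := by
  have hxx : ⟪x, x⟫ = 1 := by rw [real_inner_self_eq_norm_sq, hx]; norm_num
  have hyy : ⟪y, y⟫ = 1 := by rw [real_inner_self_eq_norm_sq, hy]; norm_num
  have hyx : ⟪y, x⟫ = ⟪x, y⟫ := real_inner_comm x y
  have hzx : ⟪z, x⟫ = ⟪x, z⟫ := real_inner_comm x z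
  have hzy : ⟪z, y⟫ = ⟪y, z⟫ := real_inner_comm y z
  have hc' : 1 + ⟪x, y⟫ ≠ 0 := ne_of_gt hc
  have hQ := gram_ineq x y z hx hy
  have e1 : ‖a • z - b • rotMap x y z‖ ^ 2
      = (a - b) ^ 2 * ⟪z, z⟫ + 2 * a * b * ((⟪x, z⟫ + ⟪y, z⟫) ^ 2 / (1 + ⟪x, y⟫))
        - 4 * a * b * (⟪x, z⟫ * ⟪y, z⟫) := by
    rw [← real_inner_self_eq_norm_sq]
    simp only [rotMap_apply, inner_sub_left, inner_sub_right, inner_add_left, inner_add_right,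
      real_inner_smul_left, real_inner_smul_right, hxx, hyy, hyx, hzx, hzy]
    field_simp
    ring
  have e2 : ‖a • x - b • y‖ ^ 2 = a ^ 2 - 2 * a * b * ⟪x, y⟫ + b ^ 2 := by
    rw [← real_inner_self_eq_norm_sq]
    simp only [inner_sub_left, inner_sub_right, real_inner_smul_left, real_inner_smul_right,
      hxx, hyy, hyx]
    ring
  have key : ‖a • z - b • rotMap x y z‖ ^ 2 ≤ (‖a • x - b • y‖ * ‖z‖) ^ 2 := by
    rw [e1, mul_pow, e2, ← real_inner_self_eq_norm_sq]
    have h2 : (⟪x, z⟫ + ⟪y, z⟫) ^ 2 / (1 + ⟪x, y⟫)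
        ≤ 2 * ⟪x, z⟫ * ⟪y, z⟫ + (1 - ⟪x, y⟫) * ⟪z, z⟫ := by
      rw [div_le_iff₀ hc]; nlinarith [hQ]
    nlinarith [mul_le_mul_of_nonneg_left h2
      (mul_nonneg (mul_nonneg (by norm_num : (0:ℝ) ≤ 2) ha) hb)]
  exact le_of_pow_le_pow_left₀ two_ne_zero
    (mul_nonneg (norm_nonneg _) (norm_nonneg _)) key

end Aux


set_option maxHeartbeats 1000000 in
set_option synthInstance.maxHeartbeats 400000 in
/-- For `u₀ v₀ : ℝ^p` and an orthogonal matrix `Ru` sending `(|u₀|,0,…,0)` to `u₀`,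
there is an orthogonal matrix `Rv` sending `(|v₀|,0,…,0)` to `v₀` with
`‖|u₀|Ru − |v₀|Rv‖ ≤ |u₀ − v₀|` in operator norm. -/
theorem stmt0 (p : ℕ) (hp : 0 < p)
    (u₀ v₀ : EuclideanSpace ℝ (Fin p))
    (Ru : Matrix (Fin p) (Fin p) ℝ)
    (hRuO : Ru ∈ Matrix.orthogonalGroup (Fin p) ℝ)
    (hRu0 : Matrix.toEuclideanCLM (𝕜 := ℝ) Ru (EuclideanSpace.single ⟨0, hp⟩ ‖u₀‖) = u₀) :
    ∃ Rv : Matrix (Fin p) (Fin p) ℝ,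
      Rv ∈ Matrix.orthogonalGroup (Fin p) ℝ ∧
      Matrix.toEuclideanCLM (𝕜 := ℝ) Rv (EuclideanSpace.single ⟨0, hp⟩ ‖v₀‖) = v₀ ∧
      ‖‖u₀‖ • Matrix.toEuclideanCLM (𝕜 := ℝ) Ru
        - ‖v₀‖ • Matrix.toEuclideanCLM (𝕜 := ℝ) Rv‖ ≤ ‖u₀ - v₀‖ := by
  classical
  set U := Matrix.toEuclideanCLM (𝕜 := ℝ) Ru with hUdef
  set e : EuclideanSpace ℝ (Fin p) := EuclideanSpace.single ⟨0, hp⟩ (1 : ℝ) with hedef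
  have hUstar : star U * U = 1 := by
    rw [hUdef, ← map_star, ← map_mul, Matrix.star_eq_conjTranspose,
      Matrix.conjTranspose_eq_transpose_of_trivial, (Matrix.mem_orthogonalGroup_iff' (Fin p) ℝ).mp hRuO, map_one]
  have hUinner : ∀ z w : EuclideanSpace ℝ (Fin p), ⟪U z, U w⟫ = ⟪z, w⟫ := by
    intro z w
    have h1 : (star U * U) z = z := by rw [hUstar, ContinuousLinearMap.one_apply]
    calc ⟪U z, U w⟫ = ⟪(ContinuousLinearMap.adjoint U) (U z), w⟫ :=
          (ContinuousLinearMap.adjoint_inner_left U w (U z)).symm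
      _ = ⟪z, w⟫ := by
          rw [← ContinuousLinearMap.star_eq_adjoint, ← ContinuousLinearMap.mul_apply, h1]
  have hUnorm : ∀ z : EuclideanSpace ℝ (Fin p), ‖U z‖ = ‖z‖ := by
    intro z
    have h2 : ‖U z‖ ^ 2 = ‖z‖ ^ 2 := by
      rw [← real_inner_self_eq_norm_sq, ← real_inner_self_eq_norm_sq]; exact hUinner z z
    calc ‖U z‖ = Real.sqrt (‖U z‖ ^ 2) := (Real.sqrt_sq (norm_nonneg _)).symm
      _ = Real.sqrt (‖z‖ ^ 2) := by rw [h2]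
      _ = ‖z‖ := Real.sqrt_sq (norm_nonneg _)
  have hUop : ‖U‖ ≤ 1 :=
    ContinuousLinearMap.opNorm_le_bound _ zero_le_one fun z => by rw [hUnorm, one_mul]
  have he : ‖e‖ = 1 := by rw [hedef, EuclideanSpace.norm_single]; norm_num
  have hsingle : ∀ r : ℝ, EuclideanSpace.single (⟨0, hp⟩ : Fin p) r = r • e := by
    intro r
    rw [hedef]
    ext j
    by_cases hj : j = ⟨0, hp⟩ <;>
      simp [EuclideanSpace.single_apply, hj]
  set x : EuclideanSpace ℝ (Fin p) := U e with hxdef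
  have hx : ‖x‖ = 1 := by rw [hxdef, hUnorm, he]
  have hu : ‖u₀‖ • x = u₀ := by
    rw [hxdef, ← map_smul, ← hsingle]; exact hRu0
  by_cases hv0 : v₀ = 0
  · refine ⟨Ru, hRuO, ?_, ?_⟩
    · rw [hv0, norm_zero, hsingle, zero_smul, map_zero]
    · have hb0 : ‖v₀‖ = 0 := by rw [hv0, norm_zero]
      have h1 : ‖u₀‖ • U - ‖v₀‖ • Matrix.toEuclideanCLM (𝕜 := ℝ) Ru = ‖u₀‖ • U := by
        rw [← hUdef, hb0]; module
      have h2 : u₀ - v₀ = u₀ := by rw [hv0]; module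
      rw [h1, h2]
      calc ‖‖u₀‖ • U‖ ≤ ‖(‖u₀‖ : ℝ)‖ * ‖U‖ := ContinuousLinearMap.opNorm_smul_le _ _
        _ ≤ ‖(‖u₀‖ : ℝ)‖ * 1 := mul_le_mul_of_nonneg_left hUop (norm_nonneg _)
        _ = ‖u₀‖ := by rw [mul_one, Real.norm_eq_abs, abs_norm]
  · set y : EuclideanSpace ℝ (Fin p) := ‖v₀‖⁻¹ • v₀ with hydef
    have hy : ‖y‖ = 1 := norm_smul_inv_norm hv0
    have hv : ‖v₀‖ • y = v₀ := by
      rw [hydef, smul_smul, mul_inv_cancel₀ (norm_ne_zero_iff.mpr hv0), one_smul]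
    by_cases hxy : x = y
    · refine ⟨Ru, hRuO, ?_, ?_⟩
      · rw [hsingle, map_smul, ← hUdef, ← hxdef, hxy, hv]
      · have h1 : ‖u₀‖ • U - ‖v₀‖ • Matrix.toEuclideanCLM (𝕜 := ℝ) Ru
            = (‖u₀‖ - ‖v₀‖) • U := by rw [← hUdef]; module
        rw [h1]
        calc ‖(‖u₀‖ - ‖v₀‖) • U‖ ≤ ‖(‖u₀‖ - ‖v₀‖ : ℝ)‖ * ‖U‖ :=
              ContinuousLinearMap.opNorm_smul_le _ _
          _ ≤ ‖(‖u₀‖ - ‖v₀‖ : ℝ)‖ * 1 := mul_le_mul_of_nonneg_left hUop (norm_nonneg _)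
          _ = |‖u₀‖ - ‖v₀‖| := by rw [mul_one, Real.norm_eq_abs]
          _ ≤ ‖u₀ - v₀‖ := abs_norm_sub_norm_le u₀ v₀
    · by_cases hxny : x = -y
      · refine ⟨-Ru, ?_, ?_, ?_⟩
        · rw [Matrix.mem_orthogonalGroup_iff', Matrix.transpose_neg, neg_mul_neg]
          exact (Matrix.mem_orthogonalGroup_iff' (Fin p) ℝ).mp hRuO
        · rw [map_neg, hsingle, ContinuousLinearMap.neg_apply, map_smul, ← hUdef, ← hxdef,
            hxny, smul_neg, neg_neg, hv]
        · have h0 : ‖u₀‖ • U - ‖v₀‖ • Matrix.toEuclideanCLM (𝕜 := ℝ) (-Ru)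
              = (‖u₀‖ + ‖v₀‖) • U := by
            rw [map_neg, ← hUdef]; module
          have h1 : ‖u₀ - v₀‖ = ‖u₀‖ + ‖v₀‖ := by
            have h2 : u₀ - v₀ = ‖u₀‖ • x - ‖v₀‖ • y := by rw [hu, hv]
            have h3 : ‖u₀‖ • (-y) - ‖v₀‖ • y = (-(‖u₀‖ + ‖v₀‖)) • y := by module
            rw [h2, hxny, h3, norm_smul, Real.norm_eq_abs, abs_neg,
              abs_of_nonneg (by positivity), hy, mul_one]
          rw [h0, h1]
          calc ‖(‖u₀‖ + ‖v₀‖) • U‖ ≤ ‖(‖u₀‖ + ‖v₀‖ : ℝ)‖ * ‖U‖ :=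
                ContinuousLinearMap.opNorm_smul_le _ _
            _ ≤ ‖(‖u₀‖ + ‖v₀‖ : ℝ)‖ * 1 := mul_le_mul_of_nonneg_left hUop (norm_nonneg _)
            _ = ‖u₀‖ + ‖v₀‖ := by
                rw [mul_one, Real.norm_eq_abs, abs_of_nonneg (by positivity)]
      · -- main case
        have habs : |⟪x, y⟫| ≤ 1 := by
          have h := abs_real_inner_le_norm x y
          rwa [hx, hy, mul_one] at h
        have hne : ⟪x, y⟫ ≠ -1 := by
          intro h
          apply hxny
          have h1 : ⟪x, -y⟫ = 1 := by rw [inner_neg_right, h]; norm_num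
          exact (inner_eq_one_iff_of_norm_eq_one hx (by rw [norm_neg, hy])).mp h1
        have hc' : 0 < 1 + ⟪x, y⟫ := by
          rcases lt_or_eq_of_le (neg_le_of_abs_le habs) with h | h
          · linarith
          · exact absurd h.symm hne
        set S := rotMap x y with hSdef
        set f := S.comp U with hfdef
        have hfinner : ∀ z w : EuclideanSpace ℝ (Fin p), ⟪f z, f w⟫ = ⟪z, w⟫ := by
          intro z w
          rw [hfdef, ContinuousLinearMap.comp_apply, ContinuousLinearMap.comp_apply,
            hSdef, rotMap_inner x y hx hy (ne_of_gt hc'), hUinner]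
        set Rv := (Matrix.toEuclideanCLM (𝕜 := ℝ) (n := Fin p)).symm f with hRvdef
        have hRv : Matrix.toEuclideanCLM (𝕜 := ℝ) Rv = f := by
          rw [hRvdef]; exact StarAlgEquiv.apply_symm_apply _ _
        have hsf : star f * f = 1 := by
          refine ContinuousLinearMap.ext fun z => ?_
          refine ext_inner_right ℝ fun w => ?_
          rw [ContinuousLinearMap.mul_apply, ContinuousLinearMap.star_eq_adjoint,
            ContinuousLinearMap.adjoint_inner_left, hfinner, ContinuousLinearMap.one_apply]
        refine ⟨Rv, ?_, ?_, ?_⟩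
        · rw [Matrix.mem_orthogonalGroup_iff' (Fin p) ℝ, ← Matrix.conjTranspose_eq_transpose_of_trivial,
            ← Matrix.star_eq_conjTranspose, hRvdef, ← map_star, ← map_mul, hsf,
            map_one]
        · rw [hRv, hsingle, map_smul, hfdef, ContinuousLinearMap.comp_apply, ← hxdef,
            hSdef, rotMap_self x y hx (ne_of_gt hc'), hv]
        · rw [hRv]
          refine ContinuousLinearMap.opNorm_le_bound _ (norm_nonneg _) fun z => ?_
          have happ : (‖u₀‖ • U - ‖v₀‖ • f) z = ‖u₀‖ • U z - ‖v₀‖ • S (U z) := by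
            rw [ContinuousLinearMap.sub_apply, ContinuousLinearMap.smul_apply,
              ContinuousLinearMap.smul_apply, hfdef, ContinuousLinearMap.comp_apply]
          rw [happ]
          calc ‖‖u₀‖ • U z - ‖v₀‖ • S (U z)‖
              ≤ ‖‖u₀‖ • x - ‖v₀‖ • y‖ * ‖U z‖ :=
                rotMap_bound x y (U z) hx hy hc' _ _ (norm_nonneg _) (norm_nonneg _)
            _ = ‖u₀ - v₀‖ * ‖z‖ := by rw [hu, hv, hUnorm]
end

section
/- Let K ⊂ ℝ^n × ℝ^n be a nonempty compact set, Π a topological space, F : ℝ^n × Π → ℝ^m continuous, and for π ∈ Π write F_π = F(·, π). For η ≥ 0 let D_η = {(x_a, x_b) : |x_a − x_b| ≤ η}. Then there exists a continuous function ρ₁ : Π × ℝ₊ → ℝ₊ such that |F_π(x_a) − F_π(x_b)| ≥ ρ₁(π, η)|x_a − x_b| for all (x_a, x_b) ∈ K \ interior(D_η) and all π ∈ Π; moreover, if for some π the map (x_a,x_b) ↦ F_π(x_a) − F_π(x_b) never vanishes on K \ interior(D_η), then ρ₁(π, η) > 0. -/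
open Set Metric

/-- Away-from-diagonal lower Lipschitz estimate with continuous parameter-dependent constant. -/
theorem stmt2 (n m : ℕ) (P : Type*) [TopologicalSpace P]
    (K : Set (EuclideanSpace ℝ (Fin n) × EuclideanSpace ℝ (Fin n)))
    (hK : IsCompact K) (hKne : K.Nonempty)
    (F : EuclideanSpace ℝ (Fin n) → P → EuclideanSpace ℝ (Fin m))
    (hF : Continuous fun q : EuclideanSpace ℝ (Fin n) × P => F q.1 q.2) :
    ∃ ρ₁ : P × ℝ → ℝ, Continuous ρ₁ ∧ (∀ q, 0 ≤ ρ₁ q) ∧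
      (∀ (π : P) (η : ℝ), 0 ≤ η →
        ∀ x ∈ K \ interior {q : EuclideanSpace ℝ (Fin n) × EuclideanSpace ℝ (Fin n) |
            ‖q.1 - q.2‖ ≤ η},
          ρ₁ (π, η) * ‖x.1 - x.2‖ ≤ ‖F x.1 π - F x.2 π‖) ∧
      (∀ (π : P) (η : ℝ), 0 ≤ η →
        (∀ x ∈ K \ interior {q : EuclideanSpace ℝ (Fin n) × EuclideanSpace ℝ (Fin n) |
            ‖q.1 - q.2‖ ≤ η}, F x.1 π - F x.2 π ≠ 0) →
        0 < ρ₁ (π, η)) := by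
  rcases Nat.eq_zero_or_pos n with hn | hn
  · -- trivial case `n = 0`: the whole space is in the interior
    subst hn
    refine ⟨fun _ => 1, continuous_const, fun _ => zero_le_one, ?_, fun _ _ _ _ => one_pos⟩
    intro π η hη x hx
    exfalso
    haveI : Subsingleton (EuclideanSpace ℝ (Fin 0)) := by
      exact ⟨fun a b => PiLp.ext (fun i => i.elim0)⟩
    have hsub : (Set.univ : Set (EuclideanSpace ℝ (Fin 0) × EuclideanSpace ℝ (Fin 0))) ⊆
        {q : EuclideanSpace ℝ (Fin 0) × EuclideanSpace ℝ (Fin 0) | ‖q.1 - q.2‖ ≤ η} := by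
      intro q _
      have h12 : q.1 = q.2 := Subsingleton.elim _ _
      simp [Set.mem_setOf_eq, h12, hη]
    have : x ∈ interior {q : EuclideanSpace ℝ (Fin 0) × EuclideanSpace ℝ (Fin 0) |
        ‖q.1 - q.2‖ ≤ η} := by
      have h := interior_mono hsub
      rw [interior_univ] at h
      exact h (mem_univ x)
    exact hx.2 this
  · haveI : Nonempty (Fin n) := ⟨⟨0, hn⟩⟩
    haveI : Nontrivial (EuclideanSpace ℝ (Fin n)) := by infer_instance
    have hr : Continuous fun x : EuclideanSpace ℝ (Fin n) × EuclideanSpace ℝ (Fin n) =>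
        ‖x.1 - x.2‖ := (continuous_fst.sub continuous_snd).norm
    set L : (EuclideanSpace ℝ (Fin n) × EuclideanSpace ℝ (Fin n)) →L[ℝ]
        EuclideanSpace ℝ (Fin n) :=
      ContinuousLinearMap.fst ℝ _ _ - ContinuousLinearMap.snd ℝ _ _ with hL
    have hLapp : ∀ q : EuclideanSpace ℝ (Fin n) × EuclideanSpace ℝ (Fin n),
        L q = q.1 - q.2 := fun q => rfl
    have hLsurj : Function.Surjective L := fun y => ⟨(y, 0), by simp [hLapp]⟩
    have hint : ∀ η : ℝ,
        interior {q : EuclideanSpace ℝ (Fin n) × EuclideanSpace ℝ (Fin n) | ‖q.1 - q.2‖ ≤ η}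
          = {q : EuclideanSpace ℝ (Fin n) × EuclideanSpace ℝ (Fin n) | ‖q.1 - q.2‖ < η} := by
      intro η
      have h1 : {q : EuclideanSpace ℝ (Fin n) × EuclideanSpace ℝ (Fin n) | ‖q.1 - q.2‖ ≤ η}
          = L ⁻¹' closedBall 0 η := by
        ext q; simp [hLapp, mem_closedBall, dist_zero_right]
      have h2 : {q : EuclideanSpace ℝ (Fin n) × EuclideanSpace ℝ (Fin n) | ‖q.1 - q.2‖ < η}
          = L ⁻¹' ball 0 η := by
        ext q; simp [hLapp, mem_ball, dist_zero_right]
      rw [h1, h2, L.interior_preimage hLsurj, interior_closedBall' 0 η]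
    have hset : ∀ η : ℝ,
        K \ interior {q : EuclideanSpace ℝ (Fin n) × EuclideanSpace ℝ (Fin n) | ‖q.1 - q.2‖ ≤ η}
          = {x ∈ K | η ≤ ‖x.1 - x.2‖} := by
      intro η
      rw [hint η]
      ext x
      simp only [Set.mem_diff, Set.mem_setOf_eq, Set.mem_sep_iff, not_lt]
    -- the parametrized function whose min we take
    set φ : (P × ℝ) → (EuclideanSpace ℝ (Fin n) × EuclideanSpace ℝ (Fin n)) → ℝ :=
      fun p x => ‖F x.1 p.1 - F x.2 p.1‖ + max 0 (p.2 - ‖x.1 - x.2‖) with hφ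
    have hφc : Continuous ↿φ := by
      apply Continuous.add
      · exact ((hF.comp (continuous_snd.fst.prodMk continuous_fst.fst)).sub
          (hF.comp (continuous_snd.snd.prodMk continuous_fst.fst))).norm
      · exact continuous_const.max (continuous_fst.snd.sub (hr.comp continuous_snd))
    have hφ0 : ∀ p x, 0 ≤ φ p x := fun p x =>
      add_nonneg (norm_nonneg _) (le_max_left _ _)
    -- an upper bound for distances in K
    set d : ℝ := sSup ((fun x : EuclideanSpace ℝ (Fin n) × EuclideanSpace ℝ (Fin n) =>
      ‖x.1 - x.2‖) '' K) + 1 with hd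
    have hrd : ∀ x ∈ K, ‖x.1 - x.2‖ ≤ d - 1 := by
      intro x hx
      have : ‖x.1 - x.2‖ ≤ sSup ((fun x : EuclideanSpace ℝ (Fin n) ×
          EuclideanSpace ℝ (Fin n) => ‖x.1 - x.2‖) '' K) :=
        le_csSup (hK.bddAbove_image hr.continuousOn) ⟨x, hx, rfl⟩
      simp only [hd]
      linarith
    have hd0 : 0 < d := by
      obtain ⟨x₀, hx₀⟩ := hKne
      have := (norm_nonneg (x₀.1 - x₀.2)).trans (hrd x₀ hx₀)
      linarith
    refine ⟨fun p => sInf (φ p '' K) / d, ?_, ?_, ?_, ?_⟩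
    · exact (hK.continuous_sInf hφc).div_const d
    · intro p
      exact div_nonneg (Real.sInf_nonneg (fun y ⟨z, _, hz⟩ => hz ▸ hφ0 p z)) hd0.le
    · intro π η hη x hx
      rw [hset η] at hx
      obtain ⟨hxK, hηr⟩ := hx
      have h1 : sInf (φ (π, η) '' K) ≤ ‖F x.1 π - F x.2 π‖ := by
        have hmem : φ (π, η) x ∈ φ (π, η) '' K := ⟨x, hxK, rfl⟩
        have hb : BddBelow (φ (π, η) '' K) :=
          ⟨0, fun y ⟨z, _, hz⟩ => hz ▸ hφ0 (π, η) z⟩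
        have hle := csInf_le hb hmem
        have hmax : max 0 (η - ‖x.1 - x.2‖) = 0 := max_eq_left (by linarith)
        rw [hφ] at hle
        simp only [hmax, add_zero] at hle
        exact hle
      have h0 : 0 ≤ sInf (φ (π, η) '' K) :=
        Real.sInf_nonneg (fun y ⟨z, _, hz⟩ => hz ▸ hφ0 (π, η) z)
      have hxd : ‖x.1 - x.2‖ ≤ d := by have := hrd x hxK; linarith
      rw [div_mul_eq_mul_div, div_le_iff₀ hd0]
      exact mul_le_mul h1 hxd (norm_nonneg _) (norm_nonneg _)
    · intro π η hη hne
      have hc : Continuous (φ (π, η)) := by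
        rw [hφ]
        exact (((hF.comp (continuous_fst.prodMk continuous_const)).sub
          (hF.comp (continuous_snd.prodMk continuous_const))).norm).add
          (continuous_const.max (continuous_const.sub hr))
      obtain ⟨x₀, hx₀K, hmin'⟩ := hK.exists_isMinOn hKne hc.continuousOn
      have hmin : ∀ z ∈ K, φ (π, η) x₀ ≤ φ (π, η) z := fun z hz => hmin' hz
      have hlb : φ (π, η) x₀ ≤ sInf (φ (π, η) '' K) :=
        le_csInf (hKne.image _) (fun y ⟨z, hz, hz'⟩ => hz' ▸ hmin z hz)
      have hpos : 0 < φ (π, η) x₀ := by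
        rcases lt_or_ge ‖x₀.1 - x₀.2‖ η with h | h
        · exact add_pos_of_nonneg_of_pos (norm_nonneg _)
            (lt_max_of_lt_right (by linarith))
        · have hx₀ : x₀ ∈ K \ interior {q : EuclideanSpace ℝ (Fin n) ×
              EuclideanSpace ℝ (Fin n) | ‖q.1 - q.2‖ ≤ η} := by
            rw [hset η]; exact ⟨hx₀K, h⟩
          exact add_pos_of_pos_of_nonneg
            (norm_pos_iff.mpr (hne x₀ hx₀)) (le_max_left _ _)
      exact div_pos (lt_of_lt_of_le hpos hlb) hd0
end

section
/- Let 𝒦 ⊂ ℝ^n be compact, Π a compact topological space, and F : ℝ^n × Π → ℝ^m continuous with (x,π) ↦ ∂F/∂x(x,π) continuous, such that for each π ∈ Π the map F_π = F(·,π) is an injective immersion on 𝒦 (F_π injective on 𝒦 and its differential injective at each point of 𝒦). Then there exists ρ > 0 such that |F_π(x_a) − F_π(x_b)| ≥ ρ |x_a − x_b| for all x_a, x_b ∈ 𝒦 and all π ∈ Π. -/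
open Metric Set

abbrev stmt4En (n : ℕ) := EuclideanSpace ℝ (Fin n)
abbrev stmt4Em (m : ℕ) := EuclideanSpace ℝ (Fin m)

set_option maxHeartbeats 1000000

/-- A parametrized family of injective immersions on a compact set, with compact parameter
space, admits a uniform lower Lipschitz bound. -/
theorem stmt4 (n m : ℕ) (P : Type*) [TopologicalSpace P] [CompactSpace P]
    (𝒦 : Set (EuclideanSpace ℝ (Fin n))) (h𝒦 : IsCompact 𝒦)
    (F : EuclideanSpace ℝ (Fin n) → P → EuclideanSpace ℝ (Fin m))
    (hFcont : Continuous fun q : EuclideanSpace ℝ (Fin n) × P => F q.1 q.2)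
    (hC1 : ∀ π : P, ContDiff ℝ 1 (fun x => F x π))
    (hDcont : Continuous
      (fun q : EuclideanSpace ℝ (Fin n) × P => fderiv ℝ (fun x => F x q.2) q.1))
    (hInjOn : ∀ π : P, Set.InjOn (fun x => F x π) 𝒦)
    (hImm : ∀ π : P, ∀ x ∈ 𝒦, Function.Injective (fderiv ℝ (fun y => F y π) x)) :
    ∃ ρ > 0, ∀ xa ∈ 𝒦, ∀ xb ∈ 𝒦, ∀ π : P,
      ρ * ‖xa - xb‖ ≤ ‖F xa π - F xb π‖ := by
  classical
  -- trivial cases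
  rcases 𝒦.eq_empty_or_nonempty with h𝒦e | h𝒦ne
  · exact ⟨1, one_pos, by simp [h𝒦e]⟩
  rcases isEmpty_or_nonempty P with hP | hPne
  · exact ⟨1, one_pos, fun xa _ xb _ π => (IsEmpty.false π).elim⟩
  set D : (stmt4En n) × P → ((stmt4En n) →L[ℝ] (stmt4Em m)) :=
    fun q => fderiv ℝ (fun x => F x q.2) q.1 with hD
  -- local bound near each point of 𝒦 × univ
  have key : ∀ q : (stmt4En n) × P, q.1 ∈ 𝒦 → ∃ c : ℝ, 0 < c ∧ ∃ r : ℝ, 0 < r ∧ ∃ V : Set P,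
      IsOpen V ∧ q.2 ∈ V ∧ ∀ π ∈ V, ∀ ya ∈ ball q.1 r, ∀ yb ∈ ball q.1 r,
        c * ‖ya - yb‖ ≤ ‖F ya π - F yb π‖ := by
    intro q hq
    obtain ⟨K, hK, hKa⟩ := (D q).toLinearMap.exists_antilipschitzWith
      (LinearMap.ker_eq_bot.2 (hImm q.2 q.1 hq))
    set c0 : ℝ := (K : ℝ)⁻¹ with hc0
    have hc0pos : 0 < c0 := by positivity
    have hlow : ∀ u : stmt4En n, c0 * ‖u‖ ≤ ‖D q u‖ := by
      intro u
      have h := hKa.le_mul_dist u 0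
      simp only [dist_eq_norm, map_zero, sub_zero, ContinuousLinearMap.coe_coe] at h
      calc c0 * ‖u‖ ≤ c0 * ((K : ℝ) * ‖D q u‖) :=
            mul_le_mul_of_nonneg_left h hc0pos.le
        _ = ((K:ℝ)⁻¹ * (K:ℝ)) * ‖D q u‖ := by rw [hc0]; ring
        _ = ‖D q u‖ := by
            rw [inv_mul_cancel₀ (by exact_mod_cast hK.ne'), one_mul]
    -- neighborhood where the derivative is close to D q
    have hW : {p : (stmt4En n) × P | ‖D p - D q‖ < c0 / 2} ∈ nhds q := by
      have hopen : IsOpen {p : (stmt4En n) × P | ‖D p - D q‖ < c0 / 2} := by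
        have hcont : Continuous fun p : (stmt4En n) × P => ‖D p - D q‖ :=
          ((hDcont.sub continuous_const).norm)
        exact isOpen_lt hcont continuous_const
      exact hopen.mem_nhds (by simp [half_pos hc0pos])
    rw [mem_nhds_prod_iff] at hW
    obtain ⟨u, hu, v, hv, huv⟩ := hW
    obtain ⟨r, hr, hball⟩ := Metric.mem_nhds_iff.1 hu
    obtain ⟨V, hVv, hVopen, hVmem⟩ := mem_nhds_iff.1 hv
    refine ⟨c0 / 2, half_pos hc0pos, r, hr, V, hVopen, hVmem, ?_⟩
    intro π hπ ya hya yb hyb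
    have hderiv : ∀ z ∈ ball q.1 r, ‖fderiv ℝ (fun x => F x π) z - D q‖ ≤ c0 / 2 := by
      intro z hz
      have hzmem : (z, π) ∈ {p : (stmt4En n) × P | ‖D p - D q‖ < c0 / 2} :=
        huv ⟨hball hz, hVv hπ⟩
      exact le_of_lt hzmem
    have hmv : ‖F yb π - F ya π - (D q) (yb - ya)‖ ≤ (c0 / 2) * ‖yb - ya‖ :=
      (convex_ball q.1 r).norm_image_sub_le_of_norm_fderiv_le'
        (fun z _ => ((hC1 π).differentiable one_ne_zero).differentiableAt) hderiv hya hyb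
    have h1 : c0 * ‖yb - ya‖ ≤ ‖(D q) (yb - ya)‖ := hlow _
    have h2 : ‖(D q) (yb - ya)‖ ≤ ‖F yb π - F ya π‖ + (c0/2) * ‖yb - ya‖ := by
      calc ‖(D q) (yb - ya)‖
          ≤ ‖F yb π - F ya π‖ + ‖F yb π - F ya π - (D q) (yb - ya)‖ := by
            have h3 := norm_sub_le (F yb π - F ya π) (F yb π - F ya π - (D q) (yb - ya))
            simpa using h3
        _ ≤ ‖F yb π - F ya π‖ + (c0/2) * ‖yb - ya‖ := by linarith
    have h4 : (c0/2) * ‖yb - ya‖ ≤ ‖F yb π - F ya π‖ := by linarith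
    calc (c0/2) * ‖ya - yb‖ = (c0/2) * ‖yb - ya‖ := by rw [norm_sub_rev]
      _ ≤ ‖F yb π - F ya π‖ := h4
      _ = ‖F ya π - F yb π‖ := norm_sub_rev _ _
  choose! c hcpos r hrpos V hVopen hVmem hVbound using key
  -- compactness cover
  have hKcpt : IsCompact (𝒦 ×ˢ (univ : Set P)) := h𝒦.prod isCompact_univ
  have hUnhds : ∀ q ∈ 𝒦 ×ˢ (univ : Set P),
      (ball q.1 (r q / 2) ×ˢ V q : Set ((stmt4En n) × P)) ∈ nhds q := by
    rintro q ⟨hq1, -⟩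
    exact prod_mem_nhds (ball_mem_nhds _ (by linarith [hrpos q hq1]))
      ((hVopen q hq1).mem_nhds (hVmem q hq1))
  obtain ⟨t, hcover⟩ := hKcpt.elim_nhds_subcover' (fun q _ => ball q.1 (r q / 2) ×ˢ V q) hUnhds
  have htne : t.Nonempty := by
    obtain ⟨x, hx⟩ := h𝒦ne
    obtain ⟨π⟩ := hPne
    have hmem : (x, π) ∈ 𝒦 ×ˢ (univ : Set P) := ⟨hx, trivial⟩
    obtain ⟨q, hq, -⟩ := mem_iUnion₂.1 (hcover hmem)
    exact ⟨q, hq⟩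
  set δ : ℝ := t.inf' htne (fun q => r q.1 / 2) with hδ
  set c₀ : ℝ := t.inf' htne (fun q => c q.1) with hc₀
  have hδpos : 0 < δ := by
    rw [hδ, Finset.lt_inf'_iff]
    exact fun q _ => by linarith [hrpos q.1 q.2.1]
  have hc₀pos : 0 < c₀ := by
    rw [hc₀, Finset.lt_inf'_iff]
    exact fun q _ => hcpos q.1 q.2.1
  -- near-diagonal uniform bound
  have near : ∀ xa ∈ 𝒦, ∀ xb ∈ 𝒦, ∀ π : P, ‖xa - xb‖ < δ →
      c₀ * ‖xa - xb‖ ≤ ‖F xa π - F xb π‖ := by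
    intro xa hxa xb hxb π hlt
    have hmem : (xa, π) ∈ 𝒦 ×ˢ (univ : Set P) := ⟨hxa, trivial⟩
    obtain ⟨q, hqt, hqmem⟩ := mem_iUnion₂.1 (hcover hmem)
    obtain ⟨hxaq, hπq⟩ := hqmem
    have hq𝒦 : q.1.1 ∈ 𝒦 := q.2.1
    have hδle : δ ≤ r q.1 / 2 := Finset.inf'_le _ hqt
    rw [mem_ball, dist_eq_norm] at hxaq
    have hxbq : xb ∈ ball q.1.1 (r q.1) := by
      rw [mem_ball, dist_eq_norm]
      calc ‖xb - q.1.1‖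
          ≤ ‖xb - xa‖ + ‖xa - q.1.1‖ := norm_sub_le_norm_sub_add_norm_sub _ _ _
        _ < δ + r q.1 / 2 := by
            rw [norm_sub_rev xb xa]; exact add_lt_add hlt hxaq
        _ ≤ r q.1 / 2 + r q.1 / 2 := by linarith
        _ = r q.1 := by ring
    have hxaq' : xa ∈ ball q.1.1 (r q.1) := by
      rw [mem_ball, dist_eq_norm]
      linarith
    have hb := hVbound q.1 hq𝒦 π hπq xa hxaq' xb hxbq
    have hcle : c₀ ≤ c q.1 := Finset.inf'_le _ hqt
    calc c₀ * ‖xa - xb‖ ≤ c q.1 * ‖xa - xb‖ :=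
          mul_le_mul_of_nonneg_right hcle (norm_nonneg _)
      _ ≤ ‖F xa π - F xb π‖ := hb
  -- off-diagonal: minimum of the continuous positive function on a compact set
  set T : Set ((stmt4En n) × (stmt4En n) × P) :=
    {p | p.1 ∈ 𝒦 ∧ p.2.1 ∈ 𝒦 ∧ δ ≤ ‖p.1 - p.2.1‖} with hT
  have hTclosed : IsClosed T := by
    have h1 : IsClosed {p : (stmt4En n) × (stmt4En n) × P | p.1 ∈ 𝒦} :=
      h𝒦.isClosed.preimage continuous_fst
    have h2 : IsClosed {p : (stmt4En n) × (stmt4En n) × P | p.2.1 ∈ 𝒦} :=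
      h𝒦.isClosed.preimage (continuous_fst.comp continuous_snd)
    have h3 : IsClosed {p : (stmt4En n) × (stmt4En n) × P | δ ≤ ‖p.1 - p.2.1‖} :=
      isClosed_le continuous_const
        ((continuous_fst.sub (continuous_fst.comp continuous_snd)).norm)
    have : T = ({p : (stmt4En n) × (stmt4En n) × P | p.1 ∈ 𝒦} ∩
        {p | p.2.1 ∈ 𝒦}) ∩ {p | δ ≤ ‖p.1 - p.2.1‖} := by
      ext p; simp [hT, and_assoc]
    rw [this]
    exact (h1.inter h2).inter h3
  have hTcpt : IsCompact T := by
    have hsub : T ⊆ 𝒦 ×ˢ (𝒦 ×ˢ (univ : Set P)) := by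
      rintro ⟨a, b, π⟩ ⟨ha, hb, -⟩
      exact ⟨ha, hb, trivial⟩
    exact (h𝒦.prod (h𝒦.prod isCompact_univ)).of_isClosed_subset hTclosed hsub
  have hgcont : Continuous fun p : (stmt4En n) × (stmt4En n) × P =>
      ‖F p.1 p.2.2 - F p.2.1 p.2.2‖ := by
    apply Continuous.norm
    apply Continuous.sub
    · exact hFcont.comp (continuous_fst.prodMk (continuous_snd.comp continuous_snd))
    · exact hFcont.comp
        ((continuous_fst.comp continuous_snd).prodMk (continuous_snd.comp continuous_snd))
  -- bound on diameter of 𝒦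
  obtain ⟨M, hM⟩ := h𝒦.isBounded.subset_ball 0
  have hMpos : (0:ℝ) ≤ M := by
    obtain ⟨x, hx⟩ := h𝒦ne
    have hx' := hM hx
    rw [mem_ball, dist_zero_right] at hx'
    exact le_of_lt ((norm_nonneg x).trans_lt hx')
  have hdiam : ∀ xa ∈ 𝒦, ∀ xb ∈ 𝒦, ‖xa - xb‖ ≤ 2 * M + 1 := by
    intro xa hxa xb hxb
    have ha := hM hxa; have hb := hM hxb
    rw [mem_ball, dist_zero_right] at ha hb
    calc ‖xa - xb‖ ≤ ‖xa‖ + ‖xb‖ := norm_sub_le _ _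
      _ ≤ 2 * M + 1 := by linarith
  rcases T.eq_empty_or_nonempty with hTe | hTne
  · -- every pair is within δ
    refine ⟨c₀, hc₀pos, fun xa hxa xb hxb π => ?_⟩
    apply near xa hxa xb hxb π
    by_contra hcon
    push_neg at hcon
    have : (xa, xb, π) ∈ T := ⟨hxa, hxb, hcon⟩
    rw [hTe] at this
    exact this
  · obtain ⟨p₀, hp₀T, hp₀min⟩ := hTcpt.exists_isMinOn hTne hgcont.continuousOn
    set ε : ℝ := ‖F p₀.1 p₀.2.2 - F p₀.2.1 p₀.2.2‖ with hε
    have hεpos : 0 < ε := by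
      obtain ⟨ha, hb, hne⟩ := hp₀T
      have hne' : p₀.1 ≠ p₀.2.1 := by
        intro h
        rw [h, sub_self, norm_zero] at hne
        linarith
      have hFne : F p₀.1 p₀.2.2 ≠ F p₀.2.1 p₀.2.2 := fun h => hne' (hInjOn p₀.2.2 ha hb h)
      rw [hε]
      exact norm_pos_iff.2 (sub_ne_zero.2 hFne)
    refine ⟨min c₀ (ε / (2 * M + 1)), lt_min hc₀pos (by positivity), ?_⟩
    intro xa hxa xb hxb π
    rcases lt_or_ge ‖xa - xb‖ δ with hlt | hge
    · calc min c₀ (ε / (2 * M + 1)) * ‖xa - xb‖ ≤ c₀ * ‖xa - xb‖ :=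
            mul_le_mul_of_nonneg_right (min_le_left _ _) (norm_nonneg _)
        _ ≤ ‖F xa π - F xb π‖ := near xa hxa xb hxb π hlt
    · have hmem : (xa, xb, π) ∈ T := ⟨hxa, hxb, hge⟩
      have hmin := hp₀min hmem
      calc min c₀ (ε / (2 * M + 1)) * ‖xa - xb‖
          ≤ (ε / (2 * M + 1)) * ‖xa - xb‖ :=
            mul_le_mul_of_nonneg_right (min_le_right _ _) (norm_nonneg _)
        _ ≤ (ε / (2 * M + 1)) * (2 * M + 1) := by
            apply mul_le_mul_of_nonneg_left (hdiam xa hxa xb hxb) (by positivity)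
        _ = ε := by field_simp
        _ ≤ ‖F xa π - F xb π‖ := hmin
end

section
/- Let 𝒦 ⊂ ℝ^n be compact, Π compact, F : ℝ^n × Π → ℝ^m continuous such that there exists ρ > 0 with |F(x_a,π) − F(x_b,π)| ≥ ρ|x_a − x_b| for all x_a, x_b ∈ 𝒦 and π ∈ Π. Then there exists a continuous map F^inv : ℝ^m × Π → ℝ^n, globally Lipschitz in its first variable with constant √n/ρ uniformly in the second variable, such that F^inv(F(x,π), π) = x for all (x,π) ∈ 𝒦 × Π. -/
open Set

lemma abs_apply_le_norm {n : ℕ} (y : EuclideanSpace ℝ (Fin n)) (i : Fin n) :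
    |y i| ≤ ‖y‖ := by
  rw [EuclideanSpace.norm_eq]
  have h : ‖y i‖ ^ 2 ≤ ∑ j, ‖y j‖ ^ 2 :=
    Finset.single_le_sum (f := fun j => ‖y j‖ ^ 2) (fun j _ => sq_nonneg _) (Finset.mem_univ i)
  calc |y i| = Real.sqrt (‖y i‖ ^ 2) := by
        rw [Real.sqrt_sq_eq_abs]; simp [Real.norm_eq_abs, abs_abs]
    _ ≤ _ := Real.sqrt_le_sqrt h

/-- Parametric Lipschitz left-inverse extension: a family of maps with a uniform lower
Lipschitz bound on a compact set admits a continuous global left inverse, Lipschitz with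
constant `√n/ρ` in the first variable uniformly in the parameter. -/
theorem stmt5 (n m : ℕ) (P : Type*) [TopologicalSpace P] [CompactSpace P]
    (𝒦 : Set (EuclideanSpace ℝ (Fin n))) (h𝒦 : IsCompact 𝒦)
    (F : EuclideanSpace ℝ (Fin n) × P → EuclideanSpace ℝ (Fin m)) (hF : Continuous F)
    (ρ : ℝ) (hρ : 0 < ρ)
    (hlow : ∀ xa ∈ 𝒦, ∀ xb ∈ 𝒦, ∀ π : P, ρ * ‖xa - xb‖ ≤ ‖F (xa, π) - F (xb, π)‖) :
    ∃ Finv : EuclideanSpace ℝ (Fin m) × P → EuclideanSpace ℝ (Fin n),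
      Continuous Finv ∧
      (∀ π : P, LipschitzWith (Real.toNNReal (Real.sqrt n / ρ)) (fun z => Finv (z, π))) ∧
      ∀ x ∈ 𝒦, ∀ π : P, Finv (F (x, π), π) = x := by
  rcases 𝒦.eq_empty_or_nonempty with rfl | ⟨x₀, hx₀⟩
  · exact ⟨fun _ => 0, continuous_const,
      fun π => (LipschitzWith.const 0).weaken zero_le, by simp⟩
  -- McShane extension, coordinatewise
  set g : Fin n → (EuclideanSpace ℝ (Fin m) × P) → EuclideanSpace ℝ (Fin n) → ℝ :=
    fun i q x => x i + ρ⁻¹ * ‖F (x, q.2) - q.1‖ with hg_def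
  have hg : ∀ i, Continuous ↿(g i) := by
    intro i
    apply Continuous.add
    · exact (EuclideanSpace.proj i).continuous.comp continuous_snd
    · exact continuous_const.mul
        ((hF.comp (continuous_snd.prodMk (continuous_snd.comp continuous_fst))).sub
          (continuous_fst.comp continuous_fst)).norm
  set G : Fin n → (EuclideanSpace ℝ (Fin m) × P) → ℝ := fun i q => sInf (g i q '' 𝒦) with hG_def
  have hGc : ∀ i, Continuous (G i) := fun i => h𝒦.continuous_sInf (hg i)
  have hgc : ∀ i q, Continuous (g i q) := fun i q => (hg i).comp (Continuous.prodMk_right q)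
  have hbdd : ∀ i q, BddBelow (g i q '' 𝒦) := fun i q =>
    (h𝒦.image_of_continuousOn (hgc i q).continuousOn).bddBelow
  have hne : ∀ i q, (g i q '' 𝒦).Nonempty := fun i q => ⟨_, mem_image_of_mem _ hx₀⟩
  -- one-sided Lipschitz bound in the first variable
  have hLip : ∀ i π z z', G i (z, π) ≤ G i (z', π) + ρ⁻¹ * ‖z - z'‖ := by
    intro i π z z'
    have key : ∀ x ∈ 𝒦, G i (z, π) - ρ⁻¹ * ‖z - z'‖ ≤ g i (z', π) x := by
      intro x hx
      have h1 : G i (z, π) ≤ g i (z, π) x := csInf_le (hbdd i _) (mem_image_of_mem _ hx)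
      have h2 : ‖F (x, π) - z‖ ≤ ‖F (x, π) - z'‖ + ‖z - z'‖ := by
        calc ‖F (x, π) - z‖ = ‖(F (x, π) - z') + (z' - z)‖ := by rw [sub_add_sub_cancel]
          _ ≤ ‖F (x, π) - z'‖ + ‖z' - z‖ := norm_add_le _ _
          _ = ‖F (x, π) - z'‖ + ‖z - z'‖ := by rw [norm_sub_rev z' z]
      have h3 : ρ⁻¹ * ‖F (x, π) - z‖ ≤ ρ⁻¹ * ‖F (x, π) - z'‖ + ρ⁻¹ * ‖z - z'‖ := by
        have := mul_le_mul_of_nonneg_left h2 (inv_nonneg.2 hρ.le)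
        linarith [this]
      simp only [hg_def] at h1 ⊢
      linarith
    have : G i (z, π) - ρ⁻¹ * ‖z - z'‖ ≤ G i (z', π) := by
      apply le_csInf (hne i _)
      rintro b ⟨x, hx, rfl⟩
      exact key x hx
    linarith
  have hdist : ∀ i π z z', dist (G i (z, π)) (G i (z', π)) ≤ ρ⁻¹ * dist z z' := by
    intro i π z z'
    rw [Real.dist_eq, abs_sub_le_iff, dist_eq_norm]
    constructor
    · linarith [hLip i π z z']
    · have := hLip i π z' z
      rw [norm_sub_rev] at this
      linarith
  -- the inverse property
  have hinv : ∀ i, ∀ x ∈ 𝒦, ∀ π, G i (F (x, π), π) = x i := by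
    intro i x hx π
    apply le_antisymm
    · have h1 : G i (F (x, π), π) ≤ g i (F (x, π), π) x :=
        csInf_le (hbdd i _) (mem_image_of_mem _ hx)
      simpa [hg_def] using h1
    · apply le_csInf (hne i _)
      rintro b ⟨y, hy, rfl⟩
      have h1 := hlow y hy x hx π
      have h2 : |(y - x) i| ≤ ‖y - x‖ := abs_apply_le_norm _ i
      have h2' : x i - y i ≤ ‖y - x‖ := by
        have : (y - x) i = y i - x i := rfl
        rw [this] at h2
        cases abs_le.1 (le_refl |y i - x i|) with
        | intro hl hr => linarith [neg_abs_le (y i - x i), h2]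
      have h3 : ‖y - x‖ ≤ ρ⁻¹ * ‖F (y, π) - F (x, π)‖ := by
        rw [← div_eq_inv_mul, le_div_iff₀ hρ]
        linarith [h1, mul_comm ρ ‖y - x‖]
      simp only [hg_def]
      linarith
  -- assemble
  refine ⟨fun q => (EuclideanSpace.equiv (Fin n) ℝ).symm (fun i => G i q), ?_, ?_, ?_⟩
  · exact (EuclideanSpace.equiv (Fin n) ℝ).symm.continuous.comp
      (continuous_pi fun i => hGc i)
  · intro π
    apply LipschitzWith.of_dist_le_mul
    intro z z'
    have hcoe : (Real.toNNReal (Real.sqrt n / ρ) : ℝ) = Real.sqrt n / ρ :=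
      Real.coe_toNNReal _ (by positivity)
    rw [hcoe]
    have hdz : (0:ℝ) ≤ ρ⁻¹ * dist z z' := by positivity
    calc dist ((EuclideanSpace.equiv (Fin n) ℝ).symm (fun i => G i (z, π)))
          ((EuclideanSpace.equiv (Fin n) ℝ).symm (fun i => G i (z', π)))
        = Real.sqrt (∑ i, dist (G i (z, π)) (G i (z', π)) ^ 2) := by
          rw [EuclideanSpace.dist_eq]
          rfl
      _ ≤ Real.sqrt (∑ _i : Fin n, (ρ⁻¹ * dist z z') ^ 2) := by
          apply Real.sqrt_le_sqrt
          apply Finset.sum_le_sum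
          intro i _
          exact pow_le_pow_left₀ dist_nonneg (hdist i π z z') 2
      _ = Real.sqrt (n * (ρ⁻¹ * dist z z') ^ 2) := by
          rw [Finset.sum_const, Finset.card_univ, Fintype.card_fin, nsmul_eq_mul]
      _ = Real.sqrt n * (ρ⁻¹ * dist z z') := by
          rw [Real.sqrt_mul (by positivity), Real.sqrt_sq hdz]
      _ = Real.sqrt n / ρ * dist z z' := by field_simp
  · intro x hx π
    ext i
    exact hinv i x hx π
end

section
/- (Geometric-sum estimate for sampled error accumulation.) Let a > 0, b > 0, Δ > 0, s₀ ∈ [0, Δ], and define τ_j = Δ − s₀ + jΔ for j ∈ ℕ. For t > 0 and i ∈ ℕ with τ_i < t ≤ τ_{i+1}, let S = Σ_{j=0}^{i−1} e^{−a(t−τ_{j+1})} e^{−bτ_j}. Then: if a > b, S ≤ e^{−bt} e^{2Δ(a+b)} / (e^{Δ(a−b)} − 1); if a < b, S ≤ e^{−at} e^{2Δa} / (1 − e^{Δ(a−b)}); and if a = b, S ≤ (t/Δ) e^{−at} e^{2Δa}. -/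
/-- Geometric-sum estimate for sampled error accumulation. -/
theorem stmt17 (a b Δ s₀ : ℝ) (ha : 0 < a) (hb : 0 < b) (hΔ : 0 < Δ)
    (hs₀ : s₀ ∈ Set.Icc 0 Δ)
    (τ : ℕ → ℝ) (hτ : ∀ j : ℕ, τ j = Δ - s₀ + j * Δ)
    (t : ℝ) (i : ℕ) (hti : τ i < t) (hti' : t ≤ τ (i + 1)) :
    (a > b →
      ∑ j ∈ Finset.range i, Real.exp (-a * (t - τ (j + 1))) * Real.exp (-b * τ j)
        ≤ Real.exp (-b * t) * Real.exp (2 * Δ * (a + b)) / (Real.exp (Δ * (a - b)) - 1)) ∧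
    (a < b →
      ∑ j ∈ Finset.range i, Real.exp (-a * (t - τ (j + 1))) * Real.exp (-b * τ j)
        ≤ Real.exp (-a * t) * Real.exp (2 * Δ * a) / (1 - Real.exp (Δ * (a - b)))) ∧
    (a = b →
      ∑ j ∈ Finset.range i, Real.exp (-a * (t - τ (j + 1))) * Real.exp (-b * τ j)
        ≤ (t / Δ) * Real.exp (-a * t) * Real.exp (2 * Δ * a)) := by
  obtain ⟨hs0, hsΔ⟩ := hs₀
  have hτi := hτ i
  have hτnn : (0:ℝ) ≤ τ i := by
    rw [hτi]
    have : (0:ℝ) ≤ (i:ℝ) * Δ := by positivity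
    linarith
  have ht0 : 0 < t := lt_of_le_of_lt hτnn hti
  set d : ℝ := (a - b) * Δ with hd
  set C : ℝ := -a * t + (a - b) * (Δ - s₀) + a * Δ with hC
  have hterm : ∀ j : ℕ, Real.exp (-a * (t - τ (j + 1))) * Real.exp (-b * τ j)
      = Real.exp C * Real.exp d ^ j := by
    intro j
    rw [hτ, hτ, ← Real.exp_add, ← Real.exp_nat_mul, ← Real.exp_add]
    congr 1
    push_cast
    ring
  have hsum : ∑ j ∈ Finset.range i, Real.exp (-a * (t - τ (j + 1))) * Real.exp (-b * τ j)
      = Real.exp C * ∑ j ∈ Finset.range i, Real.exp d ^ j := by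
    rw [Finset.mul_sum]
    exact Finset.sum_congr rfl fun j _ => hterm j
  have hiΔ : (i : ℝ) * Δ < t - (Δ - s₀) := by
    rw [hτi] at hti; linarith
  refine ⟨?_, ?_, ?_⟩
  · intro hab
    have hd0 : 0 < d := mul_pos (sub_pos.2 hab) hΔ
    have hr1 : (1:ℝ) < Real.exp d := by
      have h := Real.exp_lt_exp.mpr hd0
      simpa using h
    have hden : 0 < Real.exp d - 1 := sub_pos.2 hr1
    have hΔab : Real.exp (Δ * (a - b)) = Real.exp d := by rw [hd, mul_comm]
    rw [hsum, geom_sum_eq (ne_of_gt hr1), hΔab, mul_div_assoc']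
    rw [div_le_div_iff_of_pos_right hden]
    have h1 : Real.exp C * (Real.exp d ^ i - 1) ≤ Real.exp C * Real.exp d ^ i :=
      mul_le_mul_of_nonneg_left (by linarith) (Real.exp_pos C).le
    refine h1.trans ?_
    rw [← Real.exp_nat_mul, ← Real.exp_add, ← Real.exp_add]
    apply Real.exp_le_exp.mpr
    have h2 : (a - b) * ((i:ℝ) * Δ) ≤ (a - b) * (t - (Δ - s₀)) :=
      mul_le_mul_of_nonneg_left hiΔ.le (by linarith)
    simp only [hC, hd]
    nlinarith [mul_pos ha hΔ, mul_pos hb hΔ]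
  · intro hab
    have hd0 : d < 0 := mul_neg_of_neg_of_pos (by linarith) hΔ
    have hr1 : Real.exp d < 1 := by
      have h := Real.exp_lt_exp.mpr hd0
      simpa using h
    have hden : 0 < 1 - Real.exp d := sub_pos.2 hr1
    have hΔab : Real.exp (Δ * (a - b)) = Real.exp d := by rw [hd, mul_comm]
    rw [hsum, hΔab]
    have hgeom : ∑ j ∈ Finset.range i, Real.exp d ^ j ≤ 1 / (1 - Real.exp d) := by
      rw [geom_sum_eq (ne_of_lt hr1)]
      have he : (Real.exp d ^ i - 1) / (Real.exp d - 1) = (1 - Real.exp d ^ i) / (1 - Real.exp d) := by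
        rw [div_eq_div_iff (by linarith) (by linarith)]; ring
      rw [he, div_le_div_iff_of_pos_right hden]
      nlinarith [pow_nonneg (Real.exp_pos d).le i]
    calc Real.exp C * ∑ j ∈ Finset.range i, Real.exp d ^ j
        ≤ Real.exp C * (1 / (1 - Real.exp d)) :=
          mul_le_mul_of_nonneg_left hgeom (Real.exp_pos C).le
      _ = Real.exp C / (1 - Real.exp d) := by ring
      _ ≤ Real.exp (-a * t) * Real.exp (2 * Δ * a) / (1 - Real.exp d) := by
          rw [div_le_div_iff_of_pos_right hden, ← Real.exp_add]
          apply Real.exp_le_exp.mpr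
          have h3 : (a - b) * (Δ - s₀) ≤ 0 :=
            mul_nonpos_of_nonpos_of_nonneg (by linarith) (by linarith)
          simp only [hC]
          nlinarith [mul_pos ha hΔ]
  · intro hab
    have hd0 : d = 0 := by rw [hd, hab]; ring
    rw [hsum, hd0]
    simp only [Real.exp_zero, one_pow, Finset.sum_const, Finset.card_range, smul_eq_mul, nsmul_eq_mul, mul_one]
    have hile : (i:ℝ) ≤ t / Δ := by
      rw [le_div_iff₀ hΔ]
      nlinarith
    have hCle : Real.exp C ≤ Real.exp (-a * t) * Real.exp (2 * Δ * a) := by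
      rw [← Real.exp_add]
      apply Real.exp_le_exp.mpr
      have h4 : (a - b) * (Δ - s₀) = 0 := by rw [hab]; ring
      simp only [hC]
      nlinarith [mul_pos ha hΔ]
    calc Real.exp C * (i:ℝ) ≤ (Real.exp (-a * t) * Real.exp (2 * Δ * a)) * (t / Δ) :=
          mul_le_mul hCle hile (Nat.cast_nonneg i) (by positivity)
      _ = t / Δ * Real.exp (-a * t) * Real.exp (2 * Δ * a) := by ring
end
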